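/- (Lindström–Gessel–Viennot) Let G be a finite directed acyclic graph with edge weights w : E → ℂ, and let T(u,v) = Σ_{paths π from u to v} ∏_{e∈π} w(e). Let (u_1,...,u_n) and (v_1,...,v_n) be vertices such that for every non-identity permutation σ, there is no family of pairwise vertex-disjoint paths π_i : u_i → v_{σ(i)}. Then Σ over families of pairwise vertex-disjoint paths π_i : u_i → v_i of ∏_i w(π_i) equals det[T(u_i,v_j)]_{i,j=1}^n. -/

import Mathlib

universe u

open scoped Classical

/-- The weight of a directed path: product of the weights of its edges. -/
def pathWeight {V : Type u} [Quiver.{u+1} V] (w : ∀ {a b : V}, (a ⟶ b) → ℂ) {a : V} :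
    ∀ {b : V}, Quiver.Path a b → ℂ
  | _, .nil => 1
  | _, .cons p e => pathWeight w p * w e

/-- The list of vertices visited by a directed path. -/
def pathVerts {V : Type u} [Quiver.{u+1} V] {a : V} : ∀ {b : V}, Quiver.Path a b → List V
  | _, .nil => [a]
  | b, .cons p _ => pathVerts p ++ [b]

/-- `T u v` = total weight of all directed paths from `u` to `v`.  (The graph is a finite
directed acyclic graph, encoded by requiring the set of paths between any two vertices to be
finite.) -/
noncomputable def totalWeight {V : Type u} [Quiver.{u+1} V] [∀ a b : V, Fintype (Quiver.Path a b)]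
    (w : ∀ {a b : V}, (a ⟶ b) → ℂ) (u v : V) : ℂ :=
  ∑ p : Quiver.Path u v, pathWeight w p

namespace LGV

open Quiver

variable {V : Type u} [Quiver.{u+1} V]

@[simp] lemma pathWeight_nil (w : ∀ {a b : V}, (a ⟶ b) → ℂ) (a : V) :
    pathWeight w (Path.nil : Path a a) = 1 := rfl

@[simp] lemma pathWeight_cons (w : ∀ {a b : V}, (a ⟶ b) → ℂ) {a b c : V}
    (p : Path a b) (e : b ⟶ c) :
    pathWeight w (p.cons e) = pathWeight w p * w e := rfl

@[simp] lemma pathVerts_nil (a : V) : pathVerts (Path.nil : Path a a) = [a] := rfl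

@[simp] lemma pathVerts_cons {a b c : V} (p : Path a b) (e : b ⟶ c) :
    pathVerts (p.cons e) = pathVerts p ++ [c] := rfl

lemma pathVerts_ne_nil {a b : V} (p : Path a b) : pathVerts p ≠ [] := by
  induction p with
  | nil => simp
  | cons p e ih => simp

lemma length_pathVerts {a b : V} (p : Path a b) : (pathVerts p).length = p.length + 1 := by
  induction p with
  | nil => simp
  | cons p e ih => simp [ih]

lemma pathVerts_comp {a b c : V} (p : Path a b) (q : Path b c) :
    pathVerts (p.comp q) = pathVerts p ++ (pathVerts q).tail := by
  induction q with
  | nil => simp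
  | cons q e ih =>
      rw [Path.comp_cons, pathVerts_cons, ih, pathVerts_cons,
        List.tail_append_of_ne_nil (pathVerts_ne_nil q), List.append_assoc]

lemma pathWeight_comp (w : ∀ {a b : V}, (a ⟶ b) → ℂ) {a b c : V} (p : Path a b) (q : Path b c) :
    pathWeight w (p.comp q) = pathWeight w p * pathWeight w q := by
  induction q with
  | nil => simp
  | cons q e ih => rw [Path.comp_cons, pathWeight_cons, ih, pathWeight_cons, mul_assoc]

lemma pathVerts_eq_cons {a b : V} (p : Path a b) :
    pathVerts p = a :: (pathVerts p).tail := by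
  induction p with
  | nil => simp
  | cons p e ih =>
      rw [pathVerts_cons, List.tail_append_of_ne_nil (pathVerts_ne_nil p)]
      conv_lhs => rw [ih]
      simp

lemma end_mem_pathVerts {a b : V} (p : Path a b) : b ∈ pathVerts p := by
  induction p with
  | nil => simp
  | cons p e ih => simp

lemma start_mem_pathVerts {a b : V} (p : Path a b) : a ∈ pathVerts p := by
  rw [pathVerts_eq_cons]; exact List.mem_cons_self

lemma mem_pathVerts_iff {a b x : V} {p : Path a b} :
    x ∈ pathVerts p ↔ ∃ q : Path a x, ∃ r : Path x b, q.comp r = p := by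
  constructor
  · intro hx
    induction p with
    | nil =>
        simp only [pathVerts_nil, List.mem_singleton] at hx
        subst hx
        exact ⟨Path.nil, Path.nil, rfl⟩
    | cons p e ih =>
        rw [pathVerts_cons, List.mem_append, List.mem_singleton] at hx
        rcases hx with hx | hx
        · obtain ⟨q, r, hqr⟩ := ih hx
          exact ⟨q, r.cons e, by rw [Path.comp_cons, hqr]⟩
        · subst hx
          exact ⟨p.cons e, Path.nil, Path.comp_nil _⟩
  · rintro ⟨q, r, rfl⟩
    rw [pathVerts_comp]
    exact List.mem_append_left _ (end_mem_pathVerts q)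


lemma nil_of_length_zero {a : V} (p : Path a a) (h : p.length = 0) : p = Path.nil := by
  cases p with
  | nil => rfl
  | cons q e => simp [Path.length] at h

section acyc
variable [∀ a b : V, Fintype (Quiver.Path a b)]

lemma path_acyclic {x : V} (p : Path x x) : p = Path.nil := by
  by_contra h
  have hl : 0 < p.length := Nat.pos_of_ne_zero (fun h0 => h (nil_of_length_zero p h0))
  let f : ℕ → Path x x := fun n => Nat.rec Path.nil (fun _ q => q.comp p) n
  have hlen : ∀ n, (f n).length = n * p.length := by
    intro n
    induction n with
    | zero => simp [f]
    | succ m ih => simp [f, Path.length_comp, ih]; ring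
  have hinj : Function.Injective f := by
    intro m k hmk
    have := congrArg Path.length hmk
    rw [hlen, hlen] at this
    exact Nat.eq_of_mul_eq_mul_right hl this
  have : Finite ℕ := Finite.of_injective f hinj
  exact not_finite ℕ

lemma pathVerts_nodup {a b : V} (p : Path a b) : (pathVerts p).Nodup := by
  induction p with
  | nil => simp
  | @cons c d q e ih =>
      rw [pathVerts_cons, List.nodup_append]
      refine ⟨ih, List.nodup_singleton _, ?_⟩
      intro y hy z hz hy'
      rw [List.mem_singleton] at hz; subst hz
      subst hy'
      obtain ⟨q1, r, hqr⟩ := mem_pathVerts_iff.mp hy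
      have h0 : (r.cons e) = Path.nil := path_acyclic _
      have := congrArg Path.length h0
      simp [Path.length] at this

lemma pathVerts_getElem_length {a b : V} (p : Path a b) :
    (pathVerts p)[p.length]'(by simp [length_pathVerts]) = b := by
  induction p with
  | nil => rfl
  | @cons c d q e ih =>
      have h1 : (pathVerts q).length ≤ q.length + 1 := le_of_eq (length_pathVerts q)
      simp only [pathVerts_cons, Quiver.Path.length_cons]
      rw [List.getElem_append_right h1]
      simp [length_pathVerts]

lemma pathVerts_comp_getElem {a x b : V} (q : Path a x) (r : Path x b) :
    (pathVerts (q.comp r))[q.length]'(by simp [length_pathVerts, Path.length_comp]) = x := by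
  have hb : q.length < (pathVerts q).length := by simp [length_pathVerts]
  have := pathVerts_comp q r
  rw [List.getElem_of_eq this, List.getElem_append_left hb, pathVerts_getElem_length]

lemma comp_factor_injective {a x b : V} {q q' : Path a x} {r r' : Path x b}
    (h : q.comp r = q'.comp r') : q = q' ∧ r = r' := by
  have hlentot := congrArg Path.length h
  rw [Path.length_comp, Path.length_comp] at hlentot
  have hb1 : q.length < (pathVerts (q.comp r)).length := by
    simp [length_pathVerts, Path.length_comp]
  have hb2 : q'.length < (pathVerts (q.comp r)).length := by
    simp [length_pathVerts, Path.length_comp]; omega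
  have h1 : (pathVerts (q.comp r))[q.length] = x := pathVerts_comp_getElem q r
  have hv : pathVerts (q.comp r) = pathVerts (q'.comp r') := by rw [h]
  have h2 : (pathVerts (q.comp r))[q'.length] = x := by
    rw [List.getElem_of_eq hv, pathVerts_comp_getElem q' r']
  have hnd := pathVerts_nodup (q.comp r)
  have hlen : q.length = q'.length := by
    have := h1.trans h2.symm
    exact List.Nodup.getElem_inj_iff hnd |>.mp this
  exact (Quiver.Path.comp_inj' hlen).mp h

noncomputable def splitAt {a b x : V} (p : Path a b) (h : x ∈ pathVerts p) :
    Path a x × Path x b :=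
  ⟨(mem_pathVerts_iff.mp h).choose, (mem_pathVerts_iff.mp h).choose_spec.choose⟩

lemma splitAt_spec {a b x : V} (p : Path a b) (h : x ∈ pathVerts p) :
    (splitAt p h).1.comp (splitAt p h).2 = p :=
  (mem_pathVerts_iff.mp h).choose_spec.choose_spec

lemma splitAt_eq {a b x : V} {p : Path a b} (h : x ∈ pathVerts p)
    {q : Path a x} {r : Path x b} (hqr : q.comp r = p) : splitAt p h = (q, r) := by
  obtain ⟨h1, h2⟩ := comp_factor_injective ((splitAt_spec p h).trans hqr.symm)
  exact Prod.ext h1 h2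

end acyc

def pcast {a a' b b' : V} (ha : a = a') (hb : b = b') (p : Path a b) : Path a' b' :=
  ha ▸ hb ▸ p

@[simp] lemma pcast_rfl_rfl {a b : V} (p : Path a b) : pcast rfl rfl p = p := rfl

lemma pcast_heq {a a' b b' : V} (ha : a = a') (hb : b = b') (p : Path a b) :
    HEq (pcast ha hb p) p := by subst ha; subst hb; rfl

@[simp] lemma pathVerts_pcast {a a' b b' : V} (ha : a = a') (hb : b = b') (p : Path a b) :
    pathVerts (pcast ha hb p) = pathVerts p := by subst ha; subst hb; rfl

@[simp] lemma pathWeight_pcast (w : ∀ {a b : V}, (a ⟶ b) → ℂ) {a a' b b' : V}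
    (ha : a = a') (hb : b = b') (p : Path a b) :
    pathWeight w (pcast ha hb p) = pathWeight w p := by subst ha; subst hb; rfl

lemma comp_pcast {a x b b' : V} (hb : b = b') (q : Path a x) (r : Path x b) :
    pcast rfl hb (q.comp r) = q.comp (pcast rfl hb r) := by subst hb; rfl

lemma pcast_pcast {a a' a'' b b' b'' : V} (ha : a = a') (ha' : a' = a'') (hb : b = b')
    (hb' : b' = b'') (p : Path a b) :
    pcast ha' hb' (pcast ha hb p) = pcast (ha.trans ha') (hb.trans hb') p := by
  subst ha; subst ha'; subst hb; subst hb'; rfl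


section swap
variable {V : Type u} [Quiver.{u+1} V] [∀ a b : V, Fintype (Quiver.Path a b)]
variable {n : ℕ} {u c : Fin n → V}

lemma not_disjoint_of_mem {α : Type*} {l l' : List α} {y : α} (h1 : y ∈ l) (h2 : y ∈ l') :
    ¬ List.Disjoint l l' := fun hd => hd h1 h2

lemma not_disjoint_iff {α : Type*} {l l' : List α} :
    ¬ List.Disjoint l l' ↔ ∃ y, y ∈ l ∧ y ∈ l' := by
  unfold List.Disjoint
  push_neg
  simp

omit [∀ a b : V, Fintype (Quiver.Path a b)] in
lemma mem_verts_comp {a x b : V} {q : Path a x} {r : Path x b} {y : V} :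
    y ∈ pathVerts (q.comp r) ↔ y ∈ pathVerts q ∨ y ∈ pathVerts r := by
  rw [pathVerts_comp, List.mem_append]
  constructor
  · rintro (h | h)
    · exact Or.inl h
    · exact Or.inr (List.tail_subset _ h)
  · rintro (h | h)
    · exact Or.inl h
    · rw [pathVerts_eq_cons r, List.mem_cons] at h
      rcases h with h | h
      · exact Or.inl (by rw [h]; exact end_mem_pathVerts q)
      · exact Or.inr h

variable (π : ∀ i, Quiver.Path (u i) (c i))

noncomputable def crossSet : Finset (Fin n) :=
  Finset.univ.filter (fun i => ∃ j, j ≠ i ∧ ¬ List.Disjoint (pathVerts (π i)) (pathVerts (π j)))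

lemma mem_crossSet {i : Fin n} :
    i ∈ crossSet π ↔ ∃ j, j ≠ i ∧ ¬ List.Disjoint (pathVerts (π i)) (pathVerts (π j)) := by
  simp [crossSet]

variable (hnd : ¬ Pairwise fun i j => List.Disjoint (pathVerts (π i)) (pathVerts (π j)))

include hnd

lemma crossSet_nonempty : (crossSet π).Nonempty := by
  unfold Pairwise at hnd
  push_neg at hnd
  obtain ⟨i, j, hij, hd⟩ := hnd
  exact ⟨i, (mem_crossSet _).mpr ⟨j, Ne.symm hij, hd⟩⟩

noncomputable def i0 : Fin n := (crossSet π).min' (crossSet_nonempty π hnd)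

lemma i0_mem : i0 π hnd ∈ crossSet π := Finset.min'_mem _ _

lemma i0_min {k : Fin n} (hk : k ∈ crossSet π) : i0 π hnd ≤ k := Finset.min'_le _ _ hk

def vertProp (k : ℕ) : Prop :=
  ∃ h : k < (pathVerts (π (i0 π hnd))).length,
    ∃ j, j ≠ i0 π hnd ∧ (pathVerts (π (i0 π hnd)))[k] ∈ pathVerts (π j)

lemma vertProp_exists : ∃ k, vertProp π hnd k := by
  obtain ⟨j, hj, hd⟩ := (mem_crossSet _).mp (i0_mem π hnd)
  obtain ⟨y, hy1, hy2⟩ := not_disjoint_iff.mp hd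
  obtain ⟨k, hk, hky⟩ := List.mem_iff_getElem.mp hy1
  exact ⟨k, hk, j, hj, by rw [hky]; exact hy2⟩

noncomputable def k0 : ℕ := Nat.find (vertProp_exists π hnd)

lemma k0_spec : vertProp π hnd (k0 π hnd) := Nat.find_spec (vertProp_exists π hnd)

lemma k0_lt : k0 π hnd < (pathVerts (π (i0 π hnd))).length := (k0_spec π hnd).1

lemma k0_min {k : ℕ} (hk : k < k0 π hnd) : ¬ vertProp π hnd k := Nat.find_min _ hk

noncomputable def x0 : V := (pathVerts (π (i0 π hnd)))[k0 π hnd]'(k0_lt π hnd)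

lemma x0_mem_i0 : x0 π hnd ∈ pathVerts (π (i0 π hnd)) := List.getElem_mem _

noncomputable def jSet : Finset (Fin n) :=
  Finset.univ.filter (fun j => j ≠ i0 π hnd ∧ x0 π hnd ∈ pathVerts (π j))

lemma mem_jSet {j : Fin n} :
    j ∈ jSet π hnd ↔ j ≠ i0 π hnd ∧ x0 π hnd ∈ pathVerts (π j) := by
  simp [jSet]

lemma jSet_nonempty : (jSet π hnd).Nonempty := by
  obtain ⟨hlt, j, hj, hmem⟩ := k0_spec π hnd
  exact ⟨j, (mem_jSet π hnd).mpr ⟨hj, hmem⟩⟩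

noncomputable def j0 : Fin n := (jSet π hnd).min' (jSet_nonempty π hnd)

lemma j0_mem : j0 π hnd ∈ jSet π hnd := Finset.min'_mem _ _

lemma j0_ne : j0 π hnd ≠ i0 π hnd := ((mem_jSet π hnd).mp (j0_mem π hnd)).1

lemma x0_mem_j0 : x0 π hnd ∈ pathVerts (π (j0 π hnd)) := ((mem_jSet π hnd).mp (j0_mem π hnd)).2

lemma j0_min {j : Fin n} (hj : j ∈ jSet π hnd) : j0 π hnd ≤ j := Finset.min'_le _ _ hj

lemma i0_lt_j0 : i0 π hnd < j0 π hnd := by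
  refine lt_of_le_of_ne (i0_min π hnd ?_) (Ne.symm (j0_ne π hnd))
  exact (mem_crossSet _).mpr ⟨i0 π hnd, Ne.symm (j0_ne π hnd),
    not_disjoint_of_mem (x0_mem_j0 π hnd) (x0_mem_i0 π hnd)⟩

noncomputable def qi : Path (u (i0 π hnd)) (x0 π hnd) := (splitAt _ (x0_mem_i0 π hnd)).1
noncomputable def ri : Path (x0 π hnd) (c (i0 π hnd)) := (splitAt _ (x0_mem_i0 π hnd)).2
noncomputable def qj : Path (u (j0 π hnd)) (x0 π hnd) := (splitAt _ (x0_mem_j0 π hnd)).1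
noncomputable def rj : Path (x0 π hnd) (c (j0 π hnd)) := (splitAt _ (x0_mem_j0 π hnd)).2

lemma qi_comp_ri : (qi π hnd).comp (ri π hnd) = π (i0 π hnd) := splitAt_spec _ _
lemma qj_comp_rj : (qj π hnd).comp (rj π hnd) = π (j0 π hnd) := splitAt_spec _ _

lemma mem_of_mem_qi {y : V} (h : y ∈ pathVerts (qi π hnd)) : y ∈ pathVerts (π (i0 π hnd)) := by
  rw [← qi_comp_ri π hnd]; exact mem_verts_comp.mpr (Or.inl h)
lemma mem_of_mem_ri {y : V} (h : y ∈ pathVerts (ri π hnd)) : y ∈ pathVerts (π (i0 π hnd)) := by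
  rw [← qi_comp_ri π hnd]; exact mem_verts_comp.mpr (Or.inr h)
lemma mem_of_mem_qj {y : V} (h : y ∈ pathVerts (qj π hnd)) : y ∈ pathVerts (π (j0 π hnd)) := by
  rw [← qj_comp_rj π hnd]; exact mem_verts_comp.mpr (Or.inl h)
lemma mem_of_mem_rj {y : V} (h : y ∈ pathVerts (rj π hnd)) : y ∈ pathVerts (π (j0 π hnd)) := by
  rw [← qj_comp_rj π hnd]; exact mem_verts_comp.mpr (Or.inr h)

lemma k0_eq : k0 π hnd = (qi π hnd).length := by
  have h1 : (pathVerts (π (i0 π hnd)))[k0 π hnd]'(k0_lt π hnd) = x0 π hnd := rfl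
  have hb : (qi π hnd).length < (pathVerts (π (i0 π hnd))).length := by
    rw [← qi_comp_ri π hnd, length_pathVerts, Path.length_comp]; omega
  have h2 : (pathVerts (π (i0 π hnd)))[(qi π hnd).length]'hb = x0 π hnd := by
    have hv : pathVerts (π (i0 π hnd)) = pathVerts ((qi π hnd).comp (ri π hnd)) := by
      rw [qi_comp_ri]
    rw [List.getElem_of_eq hv, pathVerts_comp_getElem]
  exact (List.Nodup.getElem_inj_iff (pathVerts_nodup _)).mp (h1.trans h2.symm)

noncomputable def swapFam : ∀ k, Path (u k) (c (Equiv.swap (i0 π hnd) (j0 π hnd) k)) :=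
  fun k =>
    if hk : k = i0 π hnd then
      pcast (congrArg u hk.symm)
        (congrArg c (by rw [hk, Equiv.swap_apply_left]))
        ((qi π hnd).comp (rj π hnd))
    else if hk2 : k = j0 π hnd then
      pcast (congrArg u hk2.symm)
        (congrArg c (by rw [hk2, Equiv.swap_apply_right]))
        ((qj π hnd).comp (ri π hnd))
    else pcast rfl (congrArg c (Equiv.swap_apply_of_ne_of_ne hk hk2).symm) (π k)

lemma pathVerts_swapFam_i0 :
    pathVerts (swapFam π hnd (i0 π hnd)) = pathVerts ((qi π hnd).comp (rj π hnd)) := by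
  rw [swapFam, dif_pos rfl, pathVerts_pcast]

lemma pathVerts_swapFam_j0 :
    pathVerts (swapFam π hnd (j0 π hnd)) = pathVerts ((qj π hnd).comp (ri π hnd)) := by
  rw [swapFam, dif_neg (j0_ne π hnd), dif_pos rfl, pathVerts_pcast]

lemma pathVerts_swapFam_other {k : Fin n} (h1 : k ≠ i0 π hnd) (h2 : k ≠ j0 π hnd) :
    pathVerts (swapFam π hnd k) = pathVerts (π k) := by
  rw [swapFam, dif_neg h1, dif_neg h2, pathVerts_pcast]

lemma pathWeight_swapFam_i0 (w : ∀ {a b : V}, (a ⟶ b) → ℂ) :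
    pathWeight w (swapFam π hnd (i0 π hnd))
      = pathWeight w (qi π hnd) * pathWeight w (rj π hnd) := by
  rw [swapFam, dif_pos rfl, pathWeight_pcast, pathWeight_comp]

lemma pathWeight_swapFam_j0 (w : ∀ {a b : V}, (a ⟶ b) → ℂ) :
    pathWeight w (swapFam π hnd (j0 π hnd))
      = pathWeight w (qj π hnd) * pathWeight w (ri π hnd) := by
  rw [swapFam, dif_neg (j0_ne π hnd), dif_pos rfl, pathWeight_pcast, pathWeight_comp]

lemma pathWeight_swapFam_other (w : ∀ {a b : V}, (a ⟶ b) → ℂ) {k : Fin n}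
    (h1 : k ≠ i0 π hnd) (h2 : k ≠ j0 π hnd) :
    pathWeight w (swapFam π hnd k) = pathWeight w (π k) := by
  rw [swapFam, dif_neg h1, dif_neg h2, pathWeight_pcast]

lemma x0_mem_swapFam_i0 : x0 π hnd ∈ pathVerts (swapFam π hnd (i0 π hnd)) := by
  rw [pathVerts_swapFam_i0]
  exact mem_verts_comp.mpr (Or.inl (end_mem_pathVerts _))

lemma x0_mem_swapFam_j0 : x0 π hnd ∈ pathVerts (swapFam π hnd (j0 π hnd)) := by
  rw [pathVerts_swapFam_j0]
  exact mem_verts_comp.mpr (Or.inl (end_mem_pathVerts _))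

lemma swapFam_not_disjoint :
    ¬ Pairwise fun i j =>
      List.Disjoint (pathVerts (swapFam π hnd i)) (pathVerts (swapFam π hnd j)) := by
  intro hp
  exact hp (Ne.symm (j0_ne π hnd)) (x0_mem_swapFam_i0 π hnd) (x0_mem_swapFam_j0 π hnd)

end swap

section swap2
variable {V : Type u} [Quiver.{u+1} V] [∀ a b : V, Fintype (Quiver.Path a b)]
variable {n : ℕ} {u c : Fin n → V}

lemma getElem_idx_congr {α : Type*} {l : List α} {i j : ℕ} (h : i = j) (hi : i < l.length) :
    l[i]'hi = l[j]'(h ▸ hi) := by subst h; rfl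

variable (π : ∀ i, Quiver.Path (u i) (c i))
variable (hnd : ¬ Pairwise fun i j => List.Disjoint (pathVerts (π i)) (pathVerts (π j)))

include hnd

lemma not_cross_of_lt {k : Fin n} (hk : k < i0 π hnd) {j : Fin n} (hj : j ≠ k) :
    List.Disjoint (pathVerts (π k)) (pathVerts (π j)) := by
  by_contra hd
  exact absurd (i0_min π hnd ((mem_crossSet _).mpr ⟨j, hj, hd⟩)) (not_le.mpr hk)

lemma i0_swapFam :
    i0 (swapFam π hnd) (swapFam_not_disjoint π hnd) = i0 π hnd := by
  apply le_antisymm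
  · apply Finset.min'_le
    exact (mem_crossSet _).mpr ⟨j0 π hnd, j0_ne π hnd,
      not_disjoint_of_mem (x0_mem_swapFam_i0 π hnd) (x0_mem_swapFam_j0 π hnd)⟩
  · apply Finset.le_min'
    intro k hk
    by_contra hlt
    push_neg at hlt
    obtain ⟨j, hjk, hd⟩ := (mem_crossSet _).mp hk
    obtain ⟨y, hy1, hy2⟩ := not_disjoint_iff.mp hd
    have hki : k ≠ i0 π hnd := ne_of_lt hlt
    have hkj : k ≠ j0 π hnd := ne_of_lt (lt_trans hlt (i0_lt_j0 π hnd))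
    rw [pathVerts_swapFam_other π hnd hki hkj] at hy1
    have hdi : y ∈ pathVerts (π (i0 π hnd)) → False := fun hmem =>
      not_cross_of_lt π hnd hlt (Ne.symm hki) hy1 hmem
    have hdj : y ∈ pathVerts (π (j0 π hnd)) → False := fun hmem =>
      not_cross_of_lt π hnd hlt (Ne.symm hkj) hy1 hmem
    by_cases hji : j = i0 π hnd
    · subst hji
      rw [pathVerts_swapFam_i0] at hy2
      rcases mem_verts_comp.mp hy2 with h | h
      · exact hdi (mem_of_mem_qi π hnd h)
      · exact hdj (mem_of_mem_rj π hnd h)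
    · by_cases hjj : j = j0 π hnd
      · subst hjj
        rw [pathVerts_swapFam_j0] at hy2
        rcases mem_verts_comp.mp hy2 with h | h
        · exact hdj (mem_of_mem_qj π hnd h)
        · exact hdi (mem_of_mem_ri π hnd h)
      · rw [pathVerts_swapFam_other π hnd hji hjj] at hy2
        exact not_cross_of_lt π hnd hlt hjk hy1 hy2

lemma getElem_qi_k0 (hb : k0 π hnd < (pathVerts (qi π hnd)).length) :
    (pathVerts (qi π hnd))[k0 π hnd]'hb = x0 π hnd := by
  rw [getElem_idx_congr (k0_eq π hnd) hb]
  exact pathVerts_getElem_length (qi π hnd)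

lemma length_verts_qi : (pathVerts (qi π hnd)).length = k0 π hnd + 1 := by
  rw [length_pathVerts, ← k0_eq]

lemma verts_i0_eq :
    pathVerts (π (i0 π hnd)) = pathVerts (qi π hnd) ++ (pathVerts (ri π hnd)).tail := by
  rw [← qi_comp_ri π hnd, pathVerts_comp]

lemma verts_swapFam_i0_eq :
    pathVerts (swapFam π hnd (i0 π hnd))
      = pathVerts (qi π hnd) ++ (pathVerts (rj π hnd)).tail := by
  rw [pathVerts_swapFam_i0, pathVerts_comp]

lemma getElem_swapFam_k0
    (hb : k0 π hnd < (pathVerts (swapFam π hnd (i0 π hnd))).length) :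
    (pathVerts (swapFam π hnd (i0 π hnd)))[k0 π hnd]'hb = x0 π hnd := by
  rw [List.getElem_of_eq (verts_swapFam_i0_eq π hnd) hb,
    List.getElem_append_left (by rw [length_verts_qi π hnd]; omega)]
  exact getElem_qi_k0 π hnd _

lemma k0_swapFam :
    k0 (swapFam π hnd) (swapFam_not_disjoint π hnd) = k0 π hnd := by
  have hi := i0_swapFam π hnd
  apply le_antisymm
  · apply Nat.find_le
    unfold vertProp
    rw [hi]
    have hb : k0 π hnd < (pathVerts (swapFam π hnd (i0 π hnd))).length := by
      rw [verts_swapFam_i0_eq π hnd, List.length_append, length_verts_qi π hnd]; omega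
    refine ⟨hb, j0 π hnd, j0_ne π hnd, ?_⟩
    rw [getElem_swapFam_k0 π hnd hb]
    exact x0_mem_swapFam_j0 π hnd
  · refine (Nat.le_find_iff _ _).mpr ?_
    intro m hm
    unfold vertProp
    rw [hi]
    rintro ⟨hb, j, hji, hmem⟩
    have hmq : m < (pathVerts (qi π hnd)).length := by rw [length_verts_qi π hnd]; omega
    have hval : (pathVerts (swapFam π hnd (i0 π hnd)))[m]'hb = (pathVerts (qi π hnd))[m]'hmq := by
      rw [List.getElem_of_eq (verts_swapFam_i0_eq π hnd) hb, List.getElem_append_left hmq]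
    set y := (pathVerts (qi π hnd))[m]'hmq with hy
    rw [hval] at hmem
    -- y at position m in pathVerts (π (i0)), so minimality of k0 applies
    have hbL : m < (pathVerts (π (i0 π hnd))).length := by
      rw [verts_i0_eq π hnd, List.length_append, length_verts_qi π hnd]; omega
    have hvalL : (pathVerts (π (i0 π hnd)))[m]'hbL = y := by
      rw [List.getElem_of_eq (verts_i0_eq π hnd) hbL, List.getElem_append_left hmq]
    have hK := k0_min π hnd hm
    rw [vertProp] at hK
    push_neg at hK
    have hKm := hK hbL
    rw [hvalL] at hKm
    -- hKm : ∀ j, j ≠ i0 → y ∉ pathVerts (π j)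
    have hnod := pathVerts_nodup (π (i0 π hnd))
    rw [verts_i0_eq π hnd, List.nodup_append] at hnod
    obtain ⟨hnq, hnr, hdisj⟩ := hnod
    by_cases hjj : j = j0 π hnd
    · subst hjj
      rw [pathVerts_swapFam_j0] at hmem
      rcases mem_verts_comp.mp hmem with h | h
      · exact hKm _ hji (mem_of_mem_qj π hnd h)
      · -- y ∈ pathVerts (ri); y ≠ x0 since m < k0
        have hyx : y ≠ x0 π hnd := by
          intro he
          have h2 : (pathVerts (qi π hnd))[m]'hmq
              = (pathVerts (qi π hnd))[k0 π hnd]'(by rw [length_verts_qi π hnd]; omega) := by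
            rw [← hy, he, getElem_qi_k0 π hnd]
          have := (List.Nodup.getElem_inj_iff hnq).mp h2
          omega
        rw [pathVerts_eq_cons (ri π hnd), List.mem_cons] at h
        rcases h with h | h
        · exact hyx h
        · exact hdisj _ (List.getElem_mem _) _ h rfl
    · rw [pathVerts_swapFam_other π hnd hji hjj] at hmem
      exact hKm _ hji hmem

lemma x0_swapFam :
    x0 (swapFam π hnd) (swapFam_not_disjoint π hnd) = x0 π hnd := by
  have hi := i0_swapFam π hnd
  have hk := k0_swapFam π hnd
  unfold x0
  rw [getElem_idx_congr hk (k0_lt _ _)]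
  have hlist : pathVerts (swapFam π hnd (i0 (swapFam π hnd) (swapFam_not_disjoint π hnd)))
      = pathVerts (swapFam π hnd (i0 π hnd)) := by rw [hi]
  rw [List.getElem_of_eq hlist]
  exact getElem_swapFam_k0 π hnd _

lemma j0_swapFam :
    j0 (swapFam π hnd) (swapFam_not_disjoint π hnd) = j0 π hnd := by
  have hi := i0_swapFam π hnd
  have hx := x0_swapFam π hnd
  have h1 : j0 (swapFam π hnd) (swapFam_not_disjoint π hnd) ≤ j0 π hnd := by
    apply j0_min
    refine (mem_jSet _ _).mpr ⟨by rw [hi]; exact j0_ne π hnd, ?_⟩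
    rw [hx]
    exact x0_mem_swapFam_j0 π hnd
  rcases eq_or_ne (j0 (swapFam π hnd) (swapFam_not_disjoint π hnd)) (j0 π hnd) with he | hne
  · exact he
  · obtain ⟨hne', hmem'⟩ := (mem_jSet _ _).mp (j0_mem (swapFam π hnd) (swapFam_not_disjoint π hnd))
    rw [hi] at hne'
    rw [hx] at hmem'
    rw [pathVerts_swapFam_other π hnd hne' hne] at hmem'
    have h2 : j0 π hnd ≤ j0 (swapFam π hnd) (swapFam_not_disjoint π hnd) :=
      j0_min π hnd ((mem_jSet _ _).mpr ⟨hne', hmem'⟩)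
    exact le_antisymm h1 h2

lemma swapFam_heq_i0 :
    HEq (swapFam π hnd (i0 π hnd)) ((qi π hnd).comp (rj π hnd)) := by
  rw [swapFam, dif_pos rfl]; exact pcast_heq _ _ _

lemma swapFam_heq_j0 :
    HEq (swapFam π hnd (j0 π hnd)) ((qj π hnd).comp (ri π hnd)) := by
  rw [swapFam, dif_neg (j0_ne π hnd), dif_pos rfl]; exact pcast_heq _ _ _

lemma swapFam_heq_other {k : Fin n} (h1 : k ≠ i0 π hnd) (h2 : k ≠ j0 π hnd) :
    HEq (swapFam π hnd k) (π k) := by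
  rw [swapFam, dif_neg h1, dif_neg h2]; exact pcast_heq _ _ _

omit hnd in
omit [∀ a b : V, Fintype (Quiver.Path a b)] in
lemma apply_heq {ι : Sort*} {β : ι → Sort*} (f : ∀ i, β i) {a b : ι} (h : a = b) :
    HEq (f a) (f b) := by subst h; rfl

omit hnd in
lemma splitAt_heq {a b x a' b' x' : V} {p : Path a b} (h : x ∈ pathVerts p)
    (ha : a' = a) (hb : b' = b) (hx : x' = x)
    {q : Path a' x'} {r : Path x' b'} (hqr : HEq (q.comp r) p) :
    HEq (splitAt p h).1 q ∧ HEq (splitAt p h).2 r := by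
  subst ha; subst hb; subst hx
  have h2 := splitAt_eq h (eq_of_heq hqr)
  rw [h2]
  exact ⟨HEq.rfl, HEq.rfl⟩

omit hnd in
omit [∀ a b : V, Fintype (Quiver.Path a b)] in
lemma comp_heq_congr {a x b a' x' b' : V} (ha : a = a') (hx : x = x') (hb : b = b')
    {p : Path a x} {p' : Path a' x'} {q : Path x b} {q' : Path x' b'}
    (hp : HEq p p') (hq : HEq q q') : HEq (p.comp q) (p'.comp q') := by
  subst ha; subst hx; subst hb
  rw [eq_of_heq hp, eq_of_heq hq]

lemma swapFam_swapFam (k : Fin n) :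
    HEq (swapFam (swapFam π hnd) (swapFam_not_disjoint π hnd) k) (π k) := by
  have hi : i0 (swapFam π hnd) (swapFam_not_disjoint π hnd) = i0 π hnd := i0_swapFam π hnd
  have hx : x0 (swapFam π hnd) (swapFam_not_disjoint π hnd) = x0 π hnd := x0_swapFam π hnd
  have hj : j0 (swapFam π hnd) (swapFam_not_disjoint π hnd) = j0 π hnd := j0_swapFam π hnd
  have hpi : HEq (swapFam π hnd (i0 (swapFam π hnd) (swapFam_not_disjoint π hnd)))
      ((qi π hnd).comp (rj π hnd)) := by
    rw [hi]; exact swapFam_heq_i0 π hnd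
  have hpj : HEq (swapFam π hnd (j0 (swapFam π hnd) (swapFam_not_disjoint π hnd)))
      ((qj π hnd).comp (ri π hnd)) := by
    rw [hj]; exact swapFam_heq_j0 π hnd
  have hsi := splitAt_heq (x0_mem_i0 (swapFam π hnd) (swapFam_not_disjoint π hnd))
    (congrArg u hi.symm) (congrArg c (by rw [hi, Equiv.swap_apply_left]) :
      c (j0 π hnd) = c (Equiv.swap (i0 π hnd) (j0 π hnd)
        (i0 (swapFam π hnd) (swapFam_not_disjoint π hnd)))) hx.symm hpi.symm
  have hsj := splitAt_heq (x0_mem_j0 (swapFam π hnd) (swapFam_not_disjoint π hnd))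
    (congrArg u hj.symm) (congrArg c (by rw [hj, Equiv.swap_apply_right]) :
      c (i0 π hnd) = c (Equiv.swap (i0 π hnd) (j0 π hnd)
        (j0 (swapFam π hnd) (swapFam_not_disjoint π hnd)))) hx.symm hpj.symm
  -- hsi : HEq qi' (qi π hnd) ∧ HEq ri' (rj π hnd)
  -- hsj : HEq qj' (qj π hnd) ∧ HEq rj' (ri π hnd)
  by_cases hk : k = i0 π hnd
  · subst hk
    have e1 : HEq (swapFam (swapFam π hnd) (swapFam_not_disjoint π hnd) (i0 π hnd))
        (swapFam (swapFam π hnd) (swapFam_not_disjoint π hnd)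
          (i0 (swapFam π hnd) (swapFam_not_disjoint π hnd))) :=
      apply_heq (swapFam (swapFam π hnd) (swapFam_not_disjoint π hnd)) hi.symm
    refine (e1.trans (swapFam_heq_i0 (swapFam π hnd) (swapFam_not_disjoint π hnd))).trans ?_
    refine HEq.trans ?_ (heq_of_eq (qi_comp_ri π hnd))
    exact comp_heq_congr (congrArg u hi) hx
      (congrArg c (by rw [hj, Equiv.swap_apply_right])) hsi.1 hsj.2
  · by_cases hk2 : k = j0 π hnd
    · subst hk2
      have e1 : HEq (swapFam (swapFam π hnd) (swapFam_not_disjoint π hnd) (j0 π hnd))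
          (swapFam (swapFam π hnd) (swapFam_not_disjoint π hnd)
            (j0 (swapFam π hnd) (swapFam_not_disjoint π hnd))) :=
        apply_heq (swapFam (swapFam π hnd) (swapFam_not_disjoint π hnd)) hj.symm
      refine (e1.trans (swapFam_heq_j0 (swapFam π hnd) (swapFam_not_disjoint π hnd))).trans ?_
      refine HEq.trans ?_ (heq_of_eq (qj_comp_rj π hnd))
      exact comp_heq_congr (congrArg u hj) hx
        (congrArg c (by rw [hi, Equiv.swap_apply_left])) hsj.1 hsi.2
    · have hk' : k ≠ i0 (swapFam π hnd) (swapFam_not_disjoint π hnd) := by rw [hi]; exact hk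
      have hk2' : k ≠ j0 (swapFam π hnd) (swapFam_not_disjoint π hnd) := by rw [hj]; exact hk2
      exact (swapFam_heq_other (swapFam π hnd) (swapFam_not_disjoint π hnd) hk' hk2').trans
        (swapFam_heq_other π hnd hk hk2)

end swap2

section prodswap
variable {V : Type u} [Quiver.{u+1} V] [∀ a b : V, Fintype (Quiver.Path a b)]
variable {n : ℕ} {u c : Fin n → V}

lemma prod_pair_swap {i j : Fin n} (hij : i ≠ j) (f g : Fin n → ℂ)
    (h2 : f i * f j = g i * g j) (h1 : ∀ k, k ≠ i → k ≠ j → f k = g k) :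
    ∏ k, f k = ∏ k, g k := by
  have hj : j ∈ Finset.univ.erase i := Finset.mem_erase.mpr ⟨hij.symm, Finset.mem_univ j⟩
  rw [← Finset.mul_prod_erase Finset.univ f (Finset.mem_univ i),
    ← Finset.mul_prod_erase _ f hj,
    ← Finset.mul_prod_erase Finset.univ g (Finset.mem_univ i),
    ← Finset.mul_prod_erase _ g hj, ← mul_assoc, ← mul_assoc, h2]
  congr 1
  refine Finset.prod_congr rfl fun k hk => ?_
  rw [Finset.mem_erase, Finset.mem_erase] at hk
  exact h1 k hk.2.1 hk.1

variable (π : ∀ i, Quiver.Path (u i) (c i))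
variable (hnd : ¬ Pairwise fun i j => List.Disjoint (pathVerts (π i)) (pathVerts (π j)))
include hnd

lemma prod_pathWeight_swapFam (w : ∀ {a b : V}, (a ⟶ b) → ℂ) :
    ∏ k, pathWeight w (swapFam π hnd k) = ∏ k, pathWeight w (π k) := by
  refine prod_pair_swap (Ne.symm (j0_ne π hnd)) _ _ ?_ ?_
  · rw [pathWeight_swapFam_i0 π hnd w, pathWeight_swapFam_j0 π hnd w,
      ← qi_comp_ri π hnd, ← qj_comp_rj π hnd, pathWeight_comp, pathWeight_comp]
    ring
  · intro k hk1 hk2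
    exact pathWeight_swapFam_other π hnd w hk1 hk2

end prodswap
end LGV

open LGV Quiver

/-- Lindström–Gessel–Viennot: if for every non-identity permutation σ there is no
family of pairwise vertex-disjoint paths `u i → v (σ i)`, then the total weight of families of
pairwise vertex-disjoint paths `u i → v i` equals `det[T(u_i, v_j)]`. -/
theorem lindstrom_gessel_viennot {V : Type u} [Quiver.{u+1} V] [∀ a b : V, Fintype (Quiver.Path a b)]
    (w : ∀ {a b : V}, (a ⟶ b) → ℂ) (n : ℕ) (u v : Fin n → V)
    (hσ : ∀ σ : Equiv.Perm (Fin n), σ ≠ 1 →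
      ¬ ∃ π : ∀ i, Quiver.Path (u i) (v (σ i)),
          Pairwise fun i j => List.Disjoint (pathVerts (π i)) (pathVerts (π j))) :
    (∑ π : ∀ i, Quiver.Path (u i) (v i),
        if Pairwise (fun i j => List.Disjoint (pathVerts (π i)) (pathVerts (π j)))
        then ∏ i, pathWeight w (π i) else 0)
    = Matrix.det (Matrix.of fun i j => totalWeight w (u i) (v j)) := by
  
  classical
  rw [← Matrix.det_transpose, Matrix.det_apply']
  have hentry : ∀ (σ : Equiv.Perm (Fin n)),
      (∏ i, (Matrix.of fun i j => totalWeight w (u i) (v j)).transpose (σ i) i)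
        = ∑ π : ∀ i, Quiver.Path (u i) (v (σ i)), ∏ i, pathWeight w (π i) := by
    intro σ
    have h1 : (∏ i, (Matrix.of fun i j => totalWeight w (u i) (v j)).transpose (σ i) i)
        = ∏ i, ∑ p ∈ (Finset.univ : Finset (Quiver.Path (u i) (v (σ i)))), pathWeight w p :=
      rfl
    rw [h1, Finset.prod_univ_sum, Fintype.piFinset_univ]
  simp only [hentry, Finset.mul_sum]
  have hsplit : ∀ (σ : Equiv.Perm (Fin n)) (π : ∀ i, Quiver.Path (u i) (v (σ i))),
      (((Equiv.Perm.sign σ : ℤ) : ℂ) * ∏ i, pathWeight w (π i))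
        = (if Pairwise (fun i j => List.Disjoint (pathVerts (π i)) (pathVerts (π j)))
            then ((Equiv.Perm.sign σ : ℤ) : ℂ) * ∏ i, pathWeight w (π i) else 0)
          + (if Pairwise (fun i j => List.Disjoint (pathVerts (π i)) (pathVerts (π j)))
            then 0 else ((Equiv.Perm.sign σ : ℤ) : ℂ) * ∏ i, pathWeight w (π i)) := by
    intro σ π
    by_cases h : Pairwise (fun i j => List.Disjoint (pathVerts (π i)) (pathVerts (π j)))
    · rw [if_pos h, if_pos h, add_zero]
    · rw [if_neg h, if_neg h, zero_add]
  have hSAB : (∑ σ : Equiv.Perm (Fin n), ∑ π : ∀ i, Quiver.Path (u i) (v (σ i)),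
      ((Equiv.Perm.sign σ : ℤ) : ℂ) * ∏ i, pathWeight w (π i))
      = (∑ σ : Equiv.Perm (Fin n), ∑ π : ∀ i, Quiver.Path (u i) (v (σ i)),
          (if Pairwise (fun i j => List.Disjoint (pathVerts (π i)) (pathVerts (π j)))
            then ((Equiv.Perm.sign σ : ℤ) : ℂ) * ∏ i, pathWeight w (π i) else 0))
        + (∑ σ : Equiv.Perm (Fin n), ∑ π : ∀ i, Quiver.Path (u i) (v (σ i)),
          (if Pairwise (fun i j => List.Disjoint (pathVerts (π i)) (pathVerts (π j)))
            then 0 else ((Equiv.Perm.sign σ : ℤ) : ℂ) * ∏ i, pathWeight w (π i))) := by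
    rw [← Finset.sum_add_distrib]
    refine Finset.sum_congr rfl fun σ _ => ?_
    rw [← Finset.sum_add_distrib]
    refine Finset.sum_congr rfl fun π _ => hsplit σ π
  rw [hSAB]
  have hzero : (∑ σ : Equiv.Perm (Fin n), ∑ π : ∀ i, Quiver.Path (u i) (v (σ i)),
      (if Pairwise (fun i j => List.Disjoint (pathVerts (π i)) (pathVerts (π j)))
        then 0 else ((Equiv.Perm.sign σ : ℤ) : ℂ) * ∏ i, pathWeight w (π i))) = 0 := by
    rw [Finset.sum_sigma', Finset.univ_sigma_univ]
    rw [Finset.sum_congr rfl (fun a _ => (ite_not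
      (Pairwise (fun i j => List.Disjoint (pathVerts (a.2 i)) (pathVerts (a.2 j)))) _ _).symm)]
    rw [← Finset.sum_filter
      (fun a : Σ σ : Equiv.Perm (Fin n), ∀ i, Quiver.Path (u i) (v (σ i)) =>
        ¬ Pairwise (fun i j => List.Disjoint (pathVerts (a.2 i)) (pathVerts (a.2 j))))
      (fun a => ((Equiv.Perm.sign a.1 : ℤ) : ℂ) * ∏ i, pathWeight w (a.2 i))]
    refine Finset.sum_involution
      (fun a ha => ⟨a.1 * Equiv.swap (i0 a.2 (Finset.mem_filter.mp ha).2)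
          (j0 a.2 (Finset.mem_filter.mp ha).2),
        swapFam a.2 (Finset.mem_filter.mp ha).2⟩)
      ?_ ?_ ?_ ?_
    · -- cancellation
      intro a ha
      obtain ⟨σ, π⟩ := a
      set hnd := (Finset.mem_filter.mp ha).2 with hhnd
      have h1 : (∏ k, pathWeight w (swapFam π hnd k)) = ∏ k, pathWeight w (π k) :=
        prod_pathWeight_swapFam π hnd w
      have h2 : Equiv.Perm.sign (σ * Equiv.swap (i0 π hnd) (j0 π hnd))
          = - Equiv.Perm.sign σ := by
        rw [Equiv.Perm.sign_mul, Equiv.Perm.sign_swap (ne_of_lt (i0_lt_j0 π hnd))]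
        exact mul_neg_one _
      show ((Equiv.Perm.sign σ : ℤ) : ℂ) * (∏ i, pathWeight w (π i))
          + ((Equiv.Perm.sign (σ * Equiv.swap (i0 π hnd) (j0 π hnd)) : ℤ) : ℂ)
            * (∏ i, pathWeight w (swapFam π hnd i)) = 0
      rw [h1, h2]
      push_cast
      ring
    · -- g a ≠ a
      intro a ha _
      obtain ⟨σ, π⟩ := a
      intro he
      have h1 := congrArg Sigma.fst he
      simp only at h1
      have h2 : Equiv.swap (i0 π (Finset.mem_filter.mp ha).2) (j0 π (Finset.mem_filter.mp ha).2)
          = 1 := by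
        exact mul_left_cancel (a := σ) (by rw [mul_one]; exact h1)
      have h3 := congrArg (fun e => Equiv.toFun e (i0 π (Finset.mem_filter.mp ha).2)) h2
      simp only [Equiv.toFun_as_coe, Equiv.swap_apply_left, Equiv.Perm.coe_one, id_eq] at h3
      exact j0_ne π (Finset.mem_filter.mp ha).2 h3
    · -- g a ∈ s
      intro a ha
      refine Finset.mem_filter.mpr ⟨Finset.mem_univ _, ?_⟩
      exact swapFam_not_disjoint a.2 (Finset.mem_filter.mp ha).2
    · -- involutive
      intro a ha
      obtain ⟨σ, π⟩ := a
      set hnd := (Finset.mem_filter.mp ha).2 with hhnd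
      refine Sigma.ext ?_ ?_
      · show (σ * Equiv.swap (i0 π hnd) (j0 π hnd))
            * Equiv.swap (i0 (swapFam π hnd) (swapFam_not_disjoint π hnd))
                (j0 (swapFam π hnd) (swapFam_not_disjoint π hnd)) = σ
        rw [i0_swapFam π hnd, j0_swapFam π hnd, mul_assoc, Equiv.swap_mul_self, mul_one]
      · show HEq (swapFam (swapFam π hnd) (swapFam_not_disjoint π hnd)) π
        refine Function.hfunext rfl (fun k k' hkk' => ?_)
        have hk : k = k' := eq_of_heq hkk'
        subst hk
        exact swapFam_swapFam π hnd k
  rw [hzero, add_zero]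
  have hA : (∑ σ : Equiv.Perm (Fin n), ∑ π : ∀ i, Quiver.Path (u i) (v (σ i)),
      (if Pairwise (fun i j => List.Disjoint (pathVerts (π i)) (pathVerts (π j)))
        then ((Equiv.Perm.sign σ : ℤ) : ℂ) * ∏ i, pathWeight w (π i) else 0))
      = ∑ π : ∀ i, Quiver.Path (u i) (v i),
        if Pairwise (fun i j => List.Disjoint (pathVerts (π i)) (pathVerts (π j)))
        then ∏ i, pathWeight w (π i) else 0 := by
    rw [Finset.sum_eq_single 1
      (fun σ _ hσne => Finset.sum_eq_zero
        (fun π _ => if_neg (fun hD => hσ σ hσne ⟨π, hD⟩)))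
      (fun h => absurd (Finset.mem_univ 1) h)]
    simp only [Equiv.Perm.sign_one, Units.val_one, Int.cast_one, one_mul]
    rfl
  rw [hA]
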